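/- arXiv:0811.3551 — 6 statements merged into one kernel-verified Lean document; each statement's English description precedes it below -/
import Mathlib

section
/- Let S ⊂ ℝ be a subring that is finitely generated as a ℤ-module, and let Γ₁, Γ₂ ⊂ ℝⁿ be free S-modules of rank n each spanning ℝⁿ, with basis matrices B₁, B₂ ∈ GL(n,ℝ). If Γ₁ and Γ₂ are commensurate, then Γ₁ ∩ Γ₂ contains a free S-module of rank n that spans ℝⁿ. -/
/-- Two additive subgroups of `ℝⁿ` are commensurate if their intersection has
finite index in both. -/
def Commensurate {n : ℕ} (Γ Γ' : AddSubgroup (Fin n → ℝ)) : Prop :=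
  (Γ'.addSubgroupOf Γ).index ≠ 0 ∧ (Γ.addSubgroupOf Γ').index ≠ 0

/-- `B` is a basis matrix of `Γ`: `B` is invertible (its columns form an
`ℝ`-basis of `ℝⁿ`) and `Γ` is the `S`-span of the columns of `B`, i.e. `Γ` is a
free `S`-module of rank `n` spanning `ℝⁿ`. -/
def IsBasisMatrixOf {n : ℕ} (S : Subring ℝ) (B : Matrix (Fin n) (Fin n) ℝ)
    (Γ : AddSubgroup (Fin n → ℝ)) : Prop :=
  IsUnit B.det ∧ ∀ x, x ∈ Γ ↔ ∃ c : Fin n → ℝ, (∀ i, c i ∈ S) ∧ x = B.mulVec c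

theorem stmt8 {n : ℕ} (S : Subring ℝ) (hS : Module.Finite ℤ S)
    (Γ₁ Γ₂ : AddSubgroup (Fin n → ℝ)) (B₁ B₂ : Matrix (Fin n) (Fin n) ℝ)
    (h₁ : IsBasisMatrixOf S B₁ Γ₁) (h₂ : IsBasisMatrixOf S B₂ Γ₂)
    (h : Commensurate Γ₁ Γ₂) :
    ∃ B : Matrix (Fin n) (Fin n) ℝ, IsUnit B.det ∧
      ∀ c : Fin n → ℝ, (∀ i, c i ∈ S) → B.mulVec c ∈ Γ₁ ⊓ Γ₂ := by
  set H := Γ₂.addSubgroupOf Γ₁ with hH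
  set m := H.index with hm
  have hm0 : m ≠ 0 := h.1
  -- for any x ∈ Γ₁, m • x ∈ Γ₂
  have key : ∀ x ∈ Γ₁, m • x ∈ Γ₂ := by
    intro x hx
    have := H.nsmul_index_mem (⟨x, hx⟩ : Γ₁)
    rw [hH, AddSubgroup.mem_addSubgroupOf] at this
    simpa using this
  refine ⟨(m : ℝ) • B₁, ?_, ?_⟩
  · rw [Matrix.det_smul]
    exact ((isUnit_iff_ne_zero.2 (pow_ne_zero (Fintype.card (Fin n)) (Nat.cast_ne_zero.2 hm0))).mul h₁.1)
  · intro c hc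
    have hmem : B₁.mulVec c ∈ Γ₁ := (h₁.2 _).2 ⟨c, hc, rfl⟩
    have heq : ((m : ℝ) • B₁).mulVec c = m • B₁.mulVec c := by
      rw [Matrix.smul_mulVec]
      ext i; simp
    constructor
    · rw [heq]; exact Γ₁.nsmul_mem hmem m
    · rw [heq]; exact key _ hmem
end

section
/- Let S ⊂ ℝ be a subring finitely generated as a ℤ-module with field of fractions K in ℝ, and let Γ₁, Γ₂ ⊂ ℝⁿ be free S-modules of rank n spanning ℝⁿ with basis matrices B₁, B₂ ∈ GL(n,ℝ). If Γ₁ ∩ Γ₂ contains a free S-module of rank n that spans ℝⁿ, then B₂⁻¹B₁ ∈ GL(n,K). -/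
theorem stmt9 {n : ℕ} (S : Subring ℝ) (hS : Module.Finite ℤ S)
    (K : Subfield ℝ)
    (hK : ∀ x : ℝ, x ∈ K ↔ ∃ a b : ℝ, a ∈ S ∧ b ∈ S ∧ b ≠ 0 ∧ x = a / b)
    (Γ₁ Γ₂ : AddSubgroup (Fin n → ℝ)) (B₁ B₂ : Matrix (Fin n) (Fin n) ℝ)
    (h₁ : IsBasisMatrixOf S B₁ Γ₁) (h₂ : IsBasisMatrixOf S B₂ Γ₂)
    (h : ∃ B : Matrix (Fin n) (Fin n) ℝ, IsUnit B.det ∧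
      ∀ c : Fin n → ℝ, (∀ i, c i ∈ S) → B.mulVec c ∈ Γ₁ ⊓ Γ₂) :
    (∀ i j, (B₂⁻¹ * B₁) i j ∈ K) ∧ IsUnit (B₂⁻¹ * B₁).det := by
  obtain ⟨B, hBdet, hB⟩ := h
  -- the determinant part first
  have hdet : IsUnit (B₂⁻¹ * B₁).det := by
    rw [Matrix.det_mul, Matrix.det_nonsing_inv, isUnit_iff_ne_zero,
      Ring.inverse_eq_inv']
    exact mul_ne_zero (inv_ne_zero (isUnit_iff_ne_zero.mp h₂.1))
      (isUnit_iff_ne_zero.mp h₁.1)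
  refine ⟨?_, hdet⟩
  -- each column of `B` lies in `Γ₁` and `Γ₂`
  have hsingle : ∀ j : Fin n, ∀ i, (Pi.single j 1 : Fin n → ℝ) i ∈ S := by
    intro j i
    rcases eq_or_ne i j with rfl | hij
    · simpa using S.one_mem
    · simpa [Pi.single_eq_of_ne hij] using S.zero_mem
  have hcol1 : ∀ j : Fin n, ∃ c : Fin n → ℝ, (∀ i, c i ∈ S) ∧
      B.mulVec (Pi.single j 1) = B₁.mulVec c := fun j =>
    (h₁.2 _).mp (hB _ (hsingle j)).1
  have hcol2 : ∀ j : Fin n, ∃ c : Fin n → ℝ, (∀ i, c i ∈ S) ∧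
      B.mulVec (Pi.single j 1) = B₂.mulVec c := fun j =>
    (h₂.2 _).mp (hB _ (hsingle j)).2
  choose c₁ hc₁S hc₁ using hcol1
  choose c₂ hc₂S hc₂ using hcol2
  -- assemble them into matrices over `S`
  set C₁ : Matrix (Fin n) (Fin n) S := Matrix.of fun i j => ⟨c₁ j i, hc₁S j i⟩ with hC₁
  set C₂ : Matrix (Fin n) (Fin n) S := Matrix.of fun i j => ⟨c₂ j i, hc₂S j i⟩ with hC₂
  set D₁ : Matrix (Fin n) (Fin n) ℝ := S.subtype.mapMatrix C₁ with hD₁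
  set D₂ : Matrix (Fin n) (Fin n) ℝ := S.subtype.mapMatrix C₂ with hD₂
  have hB1 : B = B₁ * D₁ := by
    ext i j
    have := congrFun (hc₁ j) i
    simp only [Matrix.mulVec_single, mul_one] at this
    simpa [Matrix.mul_apply, Matrix.mulVec, dotProduct, hD₁, hC₁] using this
  have hB2 : B = B₂ * D₂ := by
    ext i j
    have := congrFun (hc₂ j) i
    simp only [Matrix.mulVec_single, mul_one] at this
    simpa [Matrix.mul_apply, Matrix.mulVec, dotProduct, hD₂, hC₂] using this
  have hD₁det : D₁.det ≠ 0 := by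
    intro h0
    apply isUnit_iff_ne_zero.mp hBdet
    rw [hB1, Matrix.det_mul, h0, mul_zero]
  -- `B₂⁻¹ * B₁ = D₂ * D₁⁻¹`
  have key : B₂⁻¹ * B₁ = D₂ * D₁⁻¹ := by
    have h1 : B₁ = B₂ * D₂ * D₁⁻¹ := by
      rw [← hB2, hB1, Matrix.mul_assoc,
        Matrix.mul_nonsing_inv _ (isUnit_iff_ne_zero.mpr hD₁det), Matrix.mul_one]
    rw [h1, ← Matrix.mul_assoc, ← Matrix.mul_assoc,
      Matrix.nonsing_inv_mul _ h₂.1, Matrix.one_mul]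
  intro i j
  rw [key]
  -- compute the entry as a quotient of elements of `S`
  have hinv : D₁⁻¹ = D₁.det⁻¹ • D₁.adjugate := by
    rw [Matrix.inv_def, Ring.inverse_eq_inv']
  have hentry : (D₂ * D₁⁻¹) i j = (D₂ * D₁.adjugate) i j / D₁.det := by
    rw [hinv, Matrix.mul_smul, Matrix.smul_apply, smul_eq_mul, div_eq_inv_mul]
  rw [hentry, hK]
  refine ⟨(D₂ * D₁.adjugate) i j, D₁.det, ?_, ?_, hD₁det, rfl⟩
  · have : D₂ * D₁.adjugate = S.subtype.mapMatrix (C₂ * C₁.adjugate) := by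
      rw [map_mul, S.subtype.map_adjugate]
    rw [this]
    exact ((C₂ * C₁.adjugate) i j).2
  · have : D₁.det = S.subtype C₁.det := (S.subtype.map_det C₁).symm
    rw [this]
    exact C₁.det.2
end

section
/- Let S ⊂ ℝ be a subring finitely generated as a ℤ-module with field of fractions K in ℝ, and let Γ₁, Γ₂ ⊂ ℝⁿ be free S-modules of rank n spanning ℝⁿ with basis matrices B₁, B₂ ∈ GL(n,ℝ). If B₂⁻¹B₁ ∈ GL(n,K), then Γ₁ and Γ₂ are commensurate as additive subgroups of ℝⁿ. -/
/-! ### Auxiliary lemmas -/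

lemma aeval_mem_subring (S : Subring ℝ) {d : ℝ} (hd : d ∈ S) (p : Polynomial ℤ) :
    Polynomial.aeval d p ∈ S := by
  induction p using Polynomial.induction_on with
  | C a => simpa using intCast_mem S a
  | add p q hp hq => simpa [map_add] using S.add_mem hp hq
  | monomial m a ih =>
      simp only [map_mul, Polynomial.aeval_X, pow_succ, ← mul_assoc] at ih ⊢
      exact S.mul_mem ih hd

/-- If `S ⊆ ℝ` is a subring finitely generated as a `ℤ`-module and `d ∈ S` is
nonzero, then some nonzero integer is a multiple of `d` inside `S`. -/
lemma exists_int_eq_mul (S : Subring ℝ) (hS : Module.Finite ℤ S) {d : ℝ}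
    (hd : d ∈ S) (hd0 : d ≠ 0) :
    ∃ (N : ℤ) (e : ℝ), N ≠ 0 ∧ e ∈ S ∧ (N : ℝ) = d * e := by
  have hint : IsIntegral ℤ d := by
    have h1 : IsIntegral ℤ (⟨d, hd⟩ : S) := IsIntegral.of_finite ℤ _
    have := h1.map (S.subtype.toIntAlgHom)
    simpa using this
  obtain ⟨p, hpm, hp⟩ := hint
  generalize hn : p.natDegree = k
  induction k using Nat.strong_induction_on generalizing p with
  | _ k ih =>
  subst hn
  rcases eq_or_ne (p.coeff 0) 0 with h0 | h0
  · have hdeg : p.natDegree ≠ 0 := by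
      intro hdeg
      rw [Polynomial.Monic.natDegree_eq_zero hpm] at hdeg
      simp [hdeg] at h0
    have hx : (Polynomial.aeval d p.divX) * d = 0 := by
      have hsplit := Polynomial.divX_mul_X_add p
      calc (Polynomial.aeval d p.divX) * d
          = Polynomial.aeval d (p.divX * Polynomial.X + Polynomial.C (p.coeff 0)) := by
            simp [h0]
        _ = 0 := by rw [hsplit]; exact hp
    have hdx : Polynomial.aeval d p.divX = 0 := by
      rcases mul_eq_zero.mp hx with hcase | hcase
      · exact hcase
      · exact absurd hcase hd0
    have hmon : p.divX.Monic := by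
      unfold Polynomial.Monic
      rw [Polynomial.leadingCoeff, Polynomial.natDegree_divX_eq_natDegree_tsub_one,
        Polynomial.coeff_divX]
      have hh : p.natDegree - 1 + 1 = p.natDegree := by omega
      rw [hh]; exact hpm
    refine ih p.divX.natDegree ?_ p.divX hmon hdx rfl
    rw [Polynomial.natDegree_divX_eq_natDegree_tsub_one]
    omega
  · refine ⟨p.coeff 0, -(Polynomial.aeval d p.divX), h0, S.neg_mem (aeval_mem_subring S hd _), ?_⟩
    have hsplit := Polynomial.divX_mul_X_add p
    have h2 : Polynomial.aeval d p.divX * d + ((p.coeff 0 : ℤ) : ℝ) = 0 := by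
      calc Polynomial.aeval d p.divX * d + ((p.coeff 0 : ℤ) : ℝ)
          = Polynomial.aeval d (p.divX * Polynomial.X + Polynomial.C (p.coeff 0)) := by simp
        _ = 0 := by rw [hsplit]; exact hp
    linarith [h2]

/-- A subgroup of `Γ₁` containing `N • Γ₁` for a nonzero integer `N` has
finite index, provided `Γ₁` is finitely generated. -/
lemma index_aux {n : ℕ} (Γ₁ Γ₂ : AddSubgroup (Fin n → ℝ)) (hfg : AddGroup.FG Γ₁)
    (N : ℤ) (hN : N ≠ 0) (hsub : ∀ x ∈ Γ₁, N • x ∈ Γ₂) :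
    (Γ₂.addSubgroupOf Γ₁).index ≠ 0 := by
  set φ : Γ₁ →+ Γ₁ := AddMonoidHom.mk' (fun x => N • x) (fun a b => zsmul_add a b N)
  set H' : AddSubgroup Γ₁ := φ.range
  have hle : H' ≤ Γ₂.addSubgroupOf Γ₁ := by
    rintro x ⟨y, rfl⟩
    show ((N • y : Γ₁) : Fin n → ℝ) ∈ Γ₂
    have : ((N • y : Γ₁) : Fin n → ℝ) = N • (y : Fin n → ℝ) := rfl
    rw [this]
    exact hsub _ y.2
  have hfin : Finite (Γ₁ ⧸ H') := by
    haveI := hfg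
    haveI : AddGroup.FG (Γ₁ ⧸ H') :=
      AddGroup.fg_of_surjective (f := QuotientAddGroup.mk' H')
        (QuotientAddGroup.mk'_surjective H')
    apply AddCommGroup.finite_of_fg_torsion
    intro g
    obtain ⟨y, rfl⟩ := QuotientAddGroup.mk'_surjective H' g
    rw [isOfFinAddOrder_iff_nsmul_eq_zero]
    refine ⟨N.natAbs, by positivity, ?_⟩
    have h1 : (N.natAbs : ℤ) • (QuotientAddGroup.mk' H' y) = 0 := by
      rcases Int.natAbs_eq N with hc | hc
      · rw [← hc, ← map_zsmul]
        exact (QuotientAddGroup.eq_zero_iff _).mpr ⟨y, rfl⟩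
      · rw [← neg_neg ((N.natAbs : ℤ)), ← hc, neg_zsmul, ← map_zsmul, neg_eq_zero]
        exact (QuotientAddGroup.eq_zero_iff _).mpr ⟨y, rfl⟩
    rwa [natCast_zsmul] at h1
  have h0 : H'.index ≠ 0 := @AddSubgroup.index_ne_zero_of_finite _ _ _ hfin
  intro h822
  exact h0 (zero_dvd_iff.mp (h822 ▸ AddSubgroup.index_dvd_of_le hle))

/-- A group with a basis matrix over a f.g. subring is finitely generated. -/
lemma fg_aux {n : ℕ} (S : Subring ℝ) (hS : Module.Finite ℤ S)
    (Γ : AddSubgroup (Fin n → ℝ)) (B : Matrix (Fin n) (Fin n) ℝ)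
    (h₁ : IsBasisMatrixOf S B Γ) : AddGroup.FG Γ := by
  haveI := hS
  let φ : (Fin n → S) →+ (Fin n → ℝ) :=
    AddMonoidHom.mk' (fun c => B.mulVec (fun i => (c i : ℝ))) (by
      intro a b
      show B.mulVec (fun i => ((a + b) i : ℝ))
        = B.mulVec (fun i => (a i : ℝ)) + B.mulVec (fun i => (b i : ℝ))
      have : (fun i => ((a + b) i : ℝ)) = (fun i => (a i : ℝ)) + fun i => (b i : ℝ) := by
        funext i; simp
      rw [this, Matrix.mulVec_add])
  have hmem : ∀ c, φ c ∈ Γ := fun c => (h₁.2 _).mpr ⟨fun i => (c i : ℝ), fun i => (c i).2, rfl⟩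
  let ψ : (Fin n → S) →+ Γ := φ.codRestrict Γ hmem
  have hsurj : Function.Surjective ψ := by
    rintro ⟨x, hx⟩
    obtain ⟨c, hc, rfl⟩ := (h₁.2 x).mp hx
    exact ⟨fun i => ⟨c i, hc i⟩, rfl⟩
  haveI : AddGroup.FG (Fin n → S) := by
    rw [← Module.Finite.iff_addGroup_fg (G := Fin n → S)]
    infer_instance
  exact AddGroup.fg_of_surjective (f := ψ) hsurj

/-- Core lemma: some nonzero integer multiple of `Γ₁ = B₁ Sⁿ` lands in `Γ₂`. -/
lemma key_aux {n : ℕ} (S : Subring ℝ) (hS : Module.Finite ℤ S)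
    (K : Subfield ℝ)
    (hK : ∀ x : ℝ, x ∈ K ↔ ∃ a b : ℝ, a ∈ S ∧ b ∈ S ∧ b ≠ 0 ∧ x = a / b)
    (Γ₂ : AddSubgroup (Fin n → ℝ)) (B₁ B₂ : Matrix (Fin n) (Fin n) ℝ)
    (h₂ : IsBasisMatrixOf S B₂ Γ₂)
    (h : ∀ i j, (B₂⁻¹ * B₁) i j ∈ K) :
    ∃ N : ℤ, N ≠ 0 ∧ ∀ c : Fin n → ℝ, (∀ i, c i ∈ S) → (N : ℤ) • B₁.mulVec c ∈ Γ₂ := by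
  set M : Matrix (Fin n) (Fin n) ℝ := B₂⁻¹ * B₁ with hM
  choose a b ha hb hb0 heq using fun i j => (hK (M i j)).mp (h i j)
  set d : ℝ := ∏ i, ∏ j, b i j with hdd
  have hd : d ∈ S := S.prod_mem (fun i _ => S.prod_mem (fun j _ => hb i j))
  have hd0 : d ≠ 0 := Finset.prod_ne_zero_iff.mpr
    (fun i _ => Finset.prod_ne_zero_iff.mpr (fun j _ => hb0 i j))
  have hdm : ∀ i j, d * M i j ∈ S := by
    intro i j
    have hfact : d = b i j * ((∏ j' ∈ Finset.univ.erase j, b i j') *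
        ∏ i' ∈ Finset.univ.erase i, ∏ j', b i' j') := by
      rw [hdd, ← Finset.mul_prod_erase Finset.univ _ (Finset.mem_univ i),
        ← Finset.mul_prod_erase Finset.univ _ (Finset.mem_univ j), mul_assoc]
    have hval : d * M i j = a i j * ((∏ j' ∈ Finset.univ.erase j, b i j') *
        ∏ i' ∈ Finset.univ.erase i, ∏ j', b i' j') := by
      rw [heq i j, hfact]
      field_simp [hb0 i j]
    rw [hval]
    exact S.mul_mem (ha i j) (S.mul_mem
      (S.prod_mem (fun j' _ => hb i j'))
      (S.prod_mem (fun i' _ => S.prod_mem (fun j' _ => hb i' j'))))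
  obtain ⟨N, e, hN0, he, hNe⟩ := exists_int_eq_mul S hS hd hd0
  refine ⟨N, hN0, fun c hc => ?_⟩
  have hBM : B₂ * M = B₁ := by
    rw [hM, ← Matrix.mul_assoc, Matrix.mul_nonsing_inv _ h₂.1, Matrix.one_mul]
  refine (h₂.2 _).mpr ⟨fun i => (N : ℝ) * (M.mulVec c) i, fun i => ?_, ?_⟩
  · show (N : ℝ) * (M.mulVec c) i ∈ S
    have : (N : ℝ) * (M.mulVec c) i = ∑ j, (e * (d * M i j)) * c j := by
      rw [Matrix.mulVec, dotProduct, Finset.mul_sum]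
      refine Finset.sum_congr rfl (fun j _ => ?_)
      rw [hNe]; ring
    rw [this]
    exact S.sum_mem (fun j _ => S.mul_mem (S.mul_mem he (hdm i j)) (hc j))
  · have h1 : B₁.mulVec c = B₂.mulVec (M.mulVec c) := by
      rw [← hBM, ← Matrix.mulVec_mulVec]
    rw [h1]
    have h2 : (fun i => (N : ℝ) * M.mulVec c i) = (N : ℝ) • (M.mulVec c) := by
      funext i; simp
    rw [h2, Matrix.mulVec_smul]
    ext i
    simp

lemma det_mem_subfield {n : ℕ} (K : Subfield ℝ) (A : Matrix (Fin n) (Fin n) ℝ)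
    (hA : ∀ i j, A i j ∈ K) : A.det ∈ K := by
  rw [Matrix.det_apply]
  exact sum_mem (fun σ _ => zsmul_mem (prod_mem (fun i _ => hA _ _)) _)

lemma inv_entry_mem_subfield {n : ℕ} (K : Subfield ℝ) (A : Matrix (Fin n) (Fin n) ℝ)
    (hA : ∀ i j, A i j ∈ K) (i j : Fin n) : A⁻¹ i j ∈ K := by
  rw [Matrix.inv_def, Matrix.smul_apply, Ring.inverse_eq_inv', smul_eq_mul]
  refine K.mul_mem (K.inv_mem (det_mem_subfield K A hA)) ?_
  rw [Matrix.adjugate_apply]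
  refine det_mem_subfield K _ (fun i' j' => ?_)
  rw [Matrix.updateRow_apply]
  split
  · rw [Pi.single_apply]
    split
    · exact K.one_mem
    · exact K.zero_mem
  · exact hA _ _

theorem stmt10 {n : ℕ} (S : Subring ℝ) (hS : Module.Finite ℤ S)
    (K : Subfield ℝ)
    (hK : ∀ x : ℝ, x ∈ K ↔ ∃ a b : ℝ, a ∈ S ∧ b ∈ S ∧ b ≠ 0 ∧ x = a / b)
    (Γ₁ Γ₂ : AddSubgroup (Fin n → ℝ)) (B₁ B₂ : Matrix (Fin n) (Fin n) ℝ)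
    (h₁ : IsBasisMatrixOf S B₁ Γ₁) (h₂ : IsBasisMatrixOf S B₂ Γ₂)
    (h : ∀ i j, (B₂⁻¹ * B₁) i j ∈ K) :
    Commensurate Γ₁ Γ₂ := by
  have h' : ∀ i j, (B₁⁻¹ * B₂) i j ∈ K := by
    have heq : B₁⁻¹ * B₂ = (B₂⁻¹ * B₁)⁻¹ := by
      rw [Matrix.mul_inv_rev, Matrix.nonsing_inv_nonsing_inv _ h₂.1]
    rw [heq]
    exact inv_entry_mem_subfield K _ h
  constructor
  · obtain ⟨N, hN0, hNmem⟩ := key_aux S hS K hK Γ₂ B₁ B₂ h₂ h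
    refine index_aux Γ₁ Γ₂ (fg_aux S hS Γ₁ B₁ h₁) N hN0 (fun x hx => ?_)
    obtain ⟨c, hc, rfl⟩ := (h₁.2 x).mp hx
    exact hNmem c hc
  · obtain ⟨N, hN0, hNmem⟩ := key_aux S hS K hK Γ₁ B₂ B₁ h₁ h'
    refine index_aux Γ₂ Γ₁ (fg_aux S hS Γ₂ B₂ h₂) N hN0 (fun x hx => ?_)
    obtain ⟨c, hc, rfl⟩ := (h₂.2 x).mp hx
    exact hNmem c hc
end

section
/- Let S ⊂ ℝ be a subring finitely generated as a ℤ-module with field of fractions K, and let Γ ⊂ ℝⁿ be a free S-module of rank n spanning ℝⁿ with basis matrix B_Γ ∈ GL(n,ℝ). Then an isometry f ∈ O(n) is a coincidence isometry of Γ if and only if the matrix of f (with respect to the standard basis) lies in B_Γ · GL(n,K) · B_Γ⁻¹. Consequently OC(Γ) ≅ O(n,ℝ) ∩ (B_Γ GL(n,K) B_Γ⁻¹). -/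
lemma exists_int_eq_mul_s11 (S : Subring ℝ) (hS : Module.Finite ℤ S) {a : ℝ}
    (haS : a ∈ S) (ha : a ≠ 0) :
    ∃ c : ℤ, c ≠ 0 ∧ ∃ s ∈ S, (c : ℝ) = a * s := by
  have hint : IsIntegral ℤ a := by
    have h1 : Algebra.IsIntegral ℤ S := Algebra.IsIntegral.of_finite ℤ S
    have h2 := (h1.isIntegral (⟨a, haS⟩ : S)).map S.subtype.toIntAlgHom
    exact h2
  obtain ⟨p, hpm, hpa⟩ := hint
  have hp0 : p ≠ 0 := hpm.ne_zero
  have hpa' : Polynomial.aeval a p = 0 := by rwa [Polynomial.aeval_def]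
  clear hpm hpa
  suffices h : ∀ N (p : Polynomial ℤ), p.natDegree ≤ N → p ≠ 0 →
      Polynomial.aeval a p = 0 → ∃ c : ℤ, c ≠ 0 ∧ ∃ s ∈ S, (c : ℝ) = a * s from
    h p.natDegree p le_rfl hp0 hpa'
  clear hp0 hpa'
  intro N
  induction N with
  | zero =>
    intro p hdeg hp0 hpa
    exfalso
    obtain ⟨c, rfl⟩ : ∃ c, p = Polynomial.C c :=
      ⟨p.coeff 0, (Polynomial.eq_C_of_natDegree_le_zero hdeg)⟩
    rw [Polynomial.aeval_C] at hpa
    have : (c : ℝ) = 0 := hpa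
    have : c = 0 := by exact_mod_cast this
    exact hp0 (by rw [this, map_zero])
  | succ N ih =>
    intro p hdeg hp0 hpa
    have hkey := Polynomial.X_mul_divX_add p
    by_cases h0 : p.coeff 0 = 0
    · have hdvx : p.divX ≠ 0 := by
        intro h
        apply hp0
        rw [h, mul_zero, zero_add, h0, map_zero] at hkey
        exact hkey.symm
      have heval : Polynomial.aeval a p.divX = 0 := by
        have h2 : Polynomial.aeval a (Polynomial.X * p.divX + Polynomial.C (p.coeff 0)) = 0 := by
          rw [hkey]; exact hpa
        simp only [h0, map_add, map_mul, Polynomial.aeval_X, map_zero, add_zero, Polynomial.aeval_C, Int.cast_zero] at h2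
        rcases mul_eq_zero.mp h2 with h | h
        · exact absurd h ha
        · exact h
      refine ih p.divX ?_ hdvx heval
      have := Polynomial.natDegree_divX_eq_natDegree_tsub_one (p := p)
      omega
    · refine ⟨p.coeff 0, h0, -((Polynomial.aeval (⟨a, haS⟩ : S) p.divX : S) : ℝ),
        S.neg_mem (SetLike.coe_mem _), ?_⟩
      have hco : Polynomial.aeval a p.divX
          = ((Polynomial.aeval (⟨a, haS⟩ : S) p.divX : S) : ℝ) :=
        by simpa using Polynomial.aeval_algHom_apply S.subtype.toIntAlgHom (⟨a, haS⟩ : S) p.divX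
      have h2 : a * Polynomial.aeval a p.divX + (p.coeff 0 : ℝ) = 0 := by
        have h3 : Polynomial.aeval a (Polynomial.X * p.divX + Polynomial.C (p.coeff 0)) = 0 := by
          rw [hkey]; exact hpa
        rw [map_add, map_mul, Polynomial.aeval_X, Polynomial.aeval_C] at h3
        exact h3
      rw [← hco]
      linarith [h2]

lemma index_ne_zero_helper {n : ℕ} (Λ H : AddSubgroup (Fin n → ℝ))
    (hfg : AddGroup.FG Λ) (c : ℤ) (hc : c ≠ 0)
    (hsub : ∀ x ∈ Λ, c • x ∈ H) : (H.addSubgroupOf Λ).index ≠ 0 := by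
  have htor : AddMonoid.IsTorsion (Λ ⧸ H.addSubgroupOf Λ) := by
    intro y
    obtain ⟨x, rfl⟩ := QuotientAddGroup.mk'_surjective (H.addSubgroupOf Λ) y
    rw [isOfFinAddOrder_iff_nsmul_eq_zero]
    refine ⟨c.natAbs, Int.natAbs_pos.mpr hc, ?_⟩
    rw [← map_nsmul, QuotientAddGroup.mk'_apply, QuotientAddGroup.eq_zero_iff]
    have hcoe : ((c.natAbs • x : Λ) : Fin n → ℝ) = c.natAbs • (x : Fin n → ℝ) := rfl
    rw [AddSubgroup.mem_addSubgroupOf, hcoe, ← natCast_zsmul]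
    rcases Int.natAbs_eq c with h | h
    · rw [← h]; exact hsub x x.2
    · rw [show ((c.natAbs : ℤ)) = -c by omega, neg_smul]
      exact H.neg_mem (hsub x x.2)
  have : Finite (Λ ⧸ H.addSubgroupOf Λ) := AddCommGroup.finite_of_fg_torsion _ htor
  exact AddSubgroup.index_ne_zero_of_finite

lemma fg_of_span {n : ℕ} (S : Subring ℝ) (hS : Module.Finite ℤ S)
    (A : Matrix (Fin n) (Fin n) ℝ) (Λ : AddSubgroup (Fin n → ℝ))
    (hΛ : ∀ x, x ∈ Λ ↔ ∃ c : Fin n → ℝ, (∀ i, c i ∈ S) ∧ x = A.mulVec c) :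
    AddGroup.FG Λ := by
  have hfg : AddGroup.FG (Fin n → S) := by
    have : Module.Finite ℤ (Fin n → S) := Module.Finite.pi
    exact Module.Finite.iff_addGroup_fg.mp this
  let f : (Fin n → S) →+ Λ :=
    { toFun := fun c => ⟨A.mulVec (fun i => (c i : ℝ)),
        (hΛ _).mpr ⟨fun i => (c i : ℝ), fun i => (c i).2, rfl⟩⟩
      map_zero' := by
        ext j
        show A.mulVec (fun i => ((0 : Fin n → S) i : ℝ)) j = 0
        rw [show (fun i => (((0 : Fin n → S) i : S) : ℝ)) = (0 : Fin n → ℝ) from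
          funext fun i => rfl, Matrix.mulVec_zero]
        rfl
      map_add' := by
        intro c d
        ext
        simp only [AddSubgroup.coe_add]
        rw [← Matrix.mulVec_add]
        congr 1 }
  have hsurj : Function.Surjective f := by
    rintro ⟨x, hx⟩
    obtain ⟨c, hc, rfl⟩ := (hΛ x).mp hx
    refine ⟨fun i => ⟨c i, hc i⟩, rfl⟩
  exact AddGroup.fg_of_surjective hsurj

lemma common_denom {n : ℕ} (S : Subring ℝ) (K : Subfield ℝ)
    (hK : ∀ x : ℝ, x ∈ K ↔ ∃ a b : ℝ, a ∈ S ∧ b ∈ S ∧ b ≠ 0 ∧ x = a / b)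
    (M : Matrix (Fin n) (Fin n) ℝ) (hM : ∀ i j, M i j ∈ K) :
    ∃ d : ℝ, d ∈ S ∧ d ≠ 0 ∧ ∀ i j, d * M i j ∈ S := by
  have h : ∀ p : Fin n × Fin n, ∃ b : ℝ, b ∈ S ∧ b ≠ 0 ∧ b * M p.1 p.2 ∈ S := by
    intro p
    obtain ⟨a, b, haS, hbS, hb0, heq⟩ := (hK _).mp (hM p.1 p.2)
    refine ⟨b, hbS, hb0, ?_⟩
    rw [heq, mul_div_cancel₀ _ hb0]
    exact haS
  choose b hbS hb0 hbM using h
  refine ⟨∏ p : Fin n × Fin n, b p, Subring.prod_mem S (fun p _ => hbS p),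
    Finset.prod_ne_zero_iff.mpr (fun p _ => hb0 p), ?_⟩
  intro i j
  rw [← Finset.mul_prod_erase Finset.univ b (Finset.mem_univ (i, j))]
  rw [mul_comm (b (i, j)) _, mul_assoc]
  exact S.mul_mem (Subring.prod_mem S (fun p _ => hbS p)) (hbM (i, j))

lemma key_smul {n : ℕ} (A P : Matrix (Fin n) (Fin n) ℝ) (c : Fin n → ℝ)
    (z d s : ℝ) (hz : z = d * s) :
    A.mulVec (fun i => ∑ j, (d * P i j) * (s * c j)) = z • (A * P).mulVec c := by
  have h1 : (fun i => ∑ j, (d * P i j) * (s * c j)) = z • P.mulVec c := by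
    ext i
    simp only [Pi.smul_apply, Matrix.mulVec, dotProduct, smul_eq_mul, hz,
      Finset.mul_sum]
    refine Finset.sum_congr rfl fun j _ => by ring
  rw [h1, Matrix.mulVec_smul, Matrix.mulVec_mulVec]

theorem stmt11 {n : ℕ} (S : Subring ℝ) (hS : Module.Finite ℤ S)
    (K : Subfield ℝ)
    (hK : ∀ x : ℝ, x ∈ K ↔ ∃ a b : ℝ, a ∈ S ∧ b ∈ S ∧ b ≠ 0 ∧ x = a / b)
    (Γ : AddSubgroup (Fin n → ℝ)) (B : Matrix (Fin n) (Fin n) ℝ)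
    (hB : IsBasisMatrixOf S B Γ) :
    ∀ Q ∈ Matrix.orthogonalGroup (Fin n) ℝ,
      (Commensurate Γ (Γ.map Q.mulVecLin.toAddMonoidHom) ↔
        ∃ M : Matrix (Fin n) (Fin n) ℝ,
          (∀ i j, M i j ∈ K) ∧ IsUnit M.det ∧ Q = B * M * B⁻¹) := by
  intro Q hQ
  obtain ⟨hBdet, hBmem⟩ := hB
  have hBinv : B⁻¹ * B = 1 := Matrix.nonsing_inv_mul B hBdet
  have hBinv' : B * B⁻¹ = 1 := Matrix.mul_nonsing_inv B hBdet
  set Γ' := Γ.map Q.mulVecLin.toAddMonoidHom with hΓ'def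
  have hΓ' : ∀ x, x ∈ Γ' ↔ ∃ c : Fin n → ℝ, (∀ i, c i ∈ S) ∧ x = (Q * B).mulVec c := by
    intro x
    rw [hΓ'def, AddSubgroup.mem_map]
    constructor
    · rintro ⟨y, hy, rfl⟩
      obtain ⟨c, hc, rfl⟩ := (hBmem y).mp hy
      exact ⟨c, hc, by simp [Matrix.mulVecLin_apply, Matrix.mulVec_mulVec]⟩
    · rintro ⟨c, hc, rfl⟩
      exact ⟨B.mulVec c, (hBmem _).mpr ⟨c, hc, rfl⟩,
        by simp [Matrix.mulVecLin_apply, Matrix.mulVec_mulVec]⟩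
  constructor
  · rintro ⟨h1, h2⟩
    refine ⟨B⁻¹ * Q * B, ?_, ?_, ?_⟩
    · intro i j
      have hejS : ∀ i : Fin n, (Pi.single j 1 : Fin n → ℝ) i ∈ S := by
        intro i
        rcases eq_or_ne i j with h | h
        · rw [h, Pi.single_eq_same]; exact S.one_mem
        · rw [Pi.single_eq_of_ne h]; exact S.zero_mem
      have hxΓ' : (Q * B).mulVec (Pi.single j 1) ∈ Γ' :=
        (hΓ' _).mpr ⟨Pi.single j 1, hejS, rfl⟩
      obtain ⟨m, hm0, -, hmmem⟩ := AddSubgroup.exists_nsmul_mem_of_index_ne_zero h2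
        ⟨(Q * B).mulVec (Pi.single j 1), hxΓ'⟩
      rw [AddSubgroup.mem_addSubgroupOf] at hmmem
      have hmmem' : m • (Q * B).mulVec (Pi.single j 1) ∈ Γ := hmmem
      obtain ⟨c, hc, hceq⟩ := (hBmem _).mp hmmem'
      have hkey : c = (m : ℝ) • (B⁻¹ * Q * B).mulVec (Pi.single j 1) := by
        have h3 := congrArg (fun v => B⁻¹.mulVec v) hceq
        simp only [Matrix.mulVec_mulVec] at h3
        rw [hBinv, Matrix.one_mulVec] at h3
        rw [← h3, ← Nat.cast_smul_eq_nsmul ℝ m, Matrix.mulVec_smul,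
          Matrix.mulVec_mulVec, ← Matrix.mul_assoc]
      have hval : (m : ℝ) * (B⁻¹ * Q * B) i j = c i := by
        rw [hkey]
        simp [Matrix.mulVec_single]
      rw [hK]
      refine ⟨c i, (m : ℝ), hc i, ?_, ?_, ?_⟩
      · exact natCast_mem S m
      · exact Nat.cast_ne_zero.mpr hm0.ne'
      · have hmne : (m : ℝ) ≠ 0 := Nat.cast_ne_zero.mpr hm0.ne'
        rw [eq_div_iff hmne, ← hval]
        ring
    · have hQdet : IsUnit Q.det := by
        have hQ' : Q * star Q = 1 := Matrix.mem_unitaryGroup_iff.mp hQ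
        have := congrArg Matrix.det hQ'
        rw [Matrix.det_mul, Matrix.det_one] at this
        exact IsUnit.of_mul_eq_one _ this
      rw [Matrix.det_mul, Matrix.det_mul]
      exact ((Matrix.isUnit_nonsing_inv_det B hBdet).mul hQdet).mul hBdet
    · have : B * (B⁻¹ * Q * B) * B⁻¹ = (B * B⁻¹) * Q * (B * B⁻¹) := by
        noncomm_ring
      rw [this, hBinv', Matrix.one_mul, Matrix.mul_one]
  · rintro ⟨M, hMK, hMdet, rfl⟩
    have hQB : B * M * B⁻¹ * B = B * M := by
      rw [Matrix.mul_assoc, hBinv, Matrix.mul_one]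
    have hΓ'2 : ∀ x, x ∈ Γ' ↔ ∃ c : Fin n → ℝ, (∀ i, c i ∈ S) ∧ x = (B * M).mulVec c := by
      intro x; rw [hΓ' x, hQB]
    have hMdet0 : M.det ≠ 0 := hMdet.ne_zero
    let M' : Matrix (Fin n) (Fin n) K := fun i j => ⟨M i j, hMK i j⟩
    have hmap : M'.map K.subtype = M := rfl
    have hdet' : M'.det ≠ 0 := by
      intro h
      apply hMdet0
      rw [← hmap, ← RingHom.mapMatrix_apply, ← RingHom.map_det, h, map_zero]
    have hinv : M' * M'⁻¹ = 1 := Matrix.mul_nonsing_inv M' (isUnit_iff_ne_zero.mpr hdet')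
    have hinv2 : M'⁻¹ * M' = 1 := Matrix.nonsing_inv_mul M' (isUnit_iff_ne_zero.mpr hdet')
    set N := (M'⁻¹).map K.subtype with hNdef
    have hMN : B * M * N = B := by
      rw [Matrix.mul_assoc, ← hmap, ← Matrix.map_mul, hinv, Matrix.map_one K.subtype
        (map_zero _) (map_one _), Matrix.mul_one]
    have hNK : ∀ i j, N i j ∈ K := fun i j => (M'⁻¹ i j).2
    obtain ⟨d, hdS, hd0, hdM⟩ := common_denom S K hK M hMK
    obtain ⟨e, heS, he0, heN⟩ := common_denom S K hK N hNK
    obtain ⟨cd, hcd0, sd, hsdS, hcdeq⟩ := exists_int_eq_mul_s11 S hS hdS hd0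
    obtain ⟨ce, hce0, se, hseS, hceeq⟩ := exists_int_eq_mul_s11 S hS heS he0
    have hfgΓ : AddGroup.FG Γ := fg_of_span S hS B Γ hBmem
    have hfgΓ' : AddGroup.FG Γ' := fg_of_span S hS (B * M) Γ' hΓ'2
    constructor
    · -- (Γ'.addSubgroupOf Γ).index ≠ 0
      refine index_ne_zero_helper Γ Γ' hfgΓ ce hce0 ?_
      intro x hx
      obtain ⟨c, hc, rfl⟩ := (hBmem x).mp hx
      refine (hΓ'2 _).mpr ⟨fun i => ∑ j, (e * N i j) * (se * c j),
        fun i => Subring.sum_mem S fun j _ =>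
          S.mul_mem (heN i j) (S.mul_mem hseS (hc j)), ?_⟩
      rw [key_smul (B * M) N c ((ce : ℝ)) e se hceeq, hMN,
        Int.cast_smul_eq_zsmul]
    · refine index_ne_zero_helper Γ' Γ hfgΓ' cd hcd0 ?_
      intro x hx
      obtain ⟨c, hc, rfl⟩ := (hΓ'2 x).mp hx
      refine (hBmem _).mpr ⟨fun i => ∑ j, (d * M i j) * (sd * c j),
        fun i => Subring.sum_mem S fun j _ =>
          S.mul_mem (hdM i j) (S.mul_mem hsdS (hc j)), ?_⟩
      rw [key_smul B M c ((cd : ℝ)) d sd hcdeq, Int.cast_smul_eq_zsmul]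
end

section
/- Let S ⊂ ℝ be a subring finitely generated as a ℤ-module with field of fractions K, and let Γ ⊂ ℝⁿ be a free S-module of rank n spanning ℝⁿ that is contained in Kⁿ. Then OC(Γ) is isomorphic to O(n,K) := O(n,ℝ) ∩ GL(n,K). In particular, OC(Sⁿ) ≅ O(n,K). -/
section Helpers

variable (S : Subring ℝ)

lemma myClearDenoms {x : ℝ} (hx : x ∈ Submodule.span ℚ (S : Set ℝ)) :
    ∃ N : ℕ, N ≠ 0 ∧ (N : ℝ) * x ∈ S := by
  induction hx using Submodule.span_induction with
  | mem y hy => exact ⟨1, one_ne_zero, by simpa using hy⟩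
  | zero => exact ⟨1, one_ne_zero, by simpa using S.zero_mem⟩
  | add y z _ _ hy hz =>
      obtain ⟨N, hN, hNy⟩ := hy
      obtain ⟨M, hM, hMz⟩ := hz
      refine ⟨N * M, mul_ne_zero hN hM, ?_⟩
      have h : ((N * M : ℕ) : ℝ) * (y + z) = (M : ℤ) • ((N : ℝ) * y) + (N : ℤ) • ((M : ℝ) * z) := by
        simp only [zsmul_eq_mul]; push_cast; ring
      rw [h]
      exact S.add_mem (S.toAddSubgroup.zsmul_mem hNy M) (S.toAddSubgroup.zsmul_mem hMz N)
  | smul q y _ hy =>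
      obtain ⟨N, hN, hNy⟩ := hy
      refine ⟨N * q.den, mul_ne_zero hN q.den_nz, ?_⟩
      have hq : (q.den : ℝ) * (q : ℝ) = (q.num : ℝ) := by
        exact_mod_cast congrArg (fun r : ℚ => (r : ℝ)) (Rat.den_mul_eq_num q)
      have h : ((N * q.den : ℕ) : ℝ) * (q • y) = (q.num : ℤ) • ((N : ℝ) * y) := by
        rw [Rat.smul_def]
        push_cast
        simp only [zsmul_eq_mul]
        rw [show (N : ℝ) * (q.den : ℝ) * ((q : ℝ) * y) = ((q.den : ℝ) * (q : ℝ)) * ((N:ℝ) * y) by ring, hq]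
      rw [h]
      exact S.toAddSubgroup.zsmul_mem hNy q.num

lemma myAevalMemSpan {e : ℝ} (he : e ∈ S) (p : Polynomial ℚ) :
    Polynomial.aeval e p ∈ Submodule.span ℚ (S : Set ℝ) := by
  induction p using Polynomial.induction_on with
  | C a =>
      have : (Polynomial.aeval e) (Polynomial.C a) = a • (1 : ℝ) := by
        simp [Algebra.algebraMap_eq_smul_one]
      rw [this]
      exact Submodule.smul_mem _ _ (Submodule.subset_span S.one_mem)
  | add p q hp hq => rw [map_add]; exact Submodule.add_mem _ hp hq
  | monomial m a _ =>
      have : (Polynomial.aeval e) (Polynomial.C a * Polynomial.X ^ (m + 1)) = a • e ^ (m + 1) := by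
        simp [Algebra.smul_def]
      rw [this]
      exact Submodule.smul_mem _ _ (Submodule.subset_span (S.pow_mem he _))

lemma myExistsNatMul (hS : Module.Finite ℤ S) {e : ℝ} (he : e ∈ S) (he0 : e ≠ 0) :
    ∃ s ∈ S, ∃ N : ℕ, 0 < N ∧ e * s = N := by
  haveI := hS
  have hint : IsIntegral ℤ e := by
    have h1 : IsIntegral ℤ (⟨e, he⟩ : S) := IsIntegral.of_finite ℤ _
    exact h1.map (S.subtype.toIntAlgHom)
  have hintQ : IsIntegral ℚ e := hint.tower_top
  set p := minpoly ℚ e with hp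
  have ha0 : p.coeff 0 ≠ 0 := minpoly.coeff_zero_ne_zero hintQ he0
  have haev : Polynomial.aeval e p = 0 := minpoly.aeval ℚ e
  set t := Polynomial.aeval e p.divX with ht
  have key : e * t + ((p.coeff 0 : ℚ) : ℝ) = 0 := by
    have h := congrArg (Polynomial.aeval e) (Polynomial.X_mul_divX_add p)
    rw [haev, map_add, map_mul, Polynomial.aeval_X, Polynomial.aeval_C,
      eq_ratCast (algebraMap ℚ ℝ)] at h
    exact h
  have het : e * t = -((p.coeff 0 : ℚ) : ℝ) := by linarith
  have hca : ((p.coeff 0 : ℚ) : ℝ) ≠ 0 := by exact_mod_cast ha0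
  set x := (-(p.coeff 0))⁻¹ • t with hxdef
  have hx : x ∈ Submodule.span ℚ (S : Set ℝ) :=
    Submodule.smul_mem _ _ (myAevalMemSpan S he _)
  have hex : e * x = 1 := by
    rw [hxdef, Rat.smul_def]
    push_cast
    rw [show e * ((-((p.coeff 0 : ℚ) : ℝ))⁻¹ * t) = (-((p.coeff 0 : ℚ) : ℝ))⁻¹ * (e * t) by ring]
    rw [het]
    field_simp
  obtain ⟨N, hN, hNS⟩ := myClearDenoms S hx
  refine ⟨(N : ℝ) * x, hNS, N, Nat.pos_of_ne_zero hN, ?_⟩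
  rw [show e * ((N : ℝ) * x) = (N : ℝ) * (e * x) by ring, hex, mul_one]

lemma myExistsNatDenom (hS : Module.Finite ℤ S) {ι : Type*} [Fintype ι]
    (v : ι → ℝ) (hv : ∀ i, ∃ a b : ℝ, a ∈ S ∧ b ∈ S ∧ b ≠ 0 ∧ v i = a / b) :
    ∃ N : ℕ, 0 < N ∧ ∀ i, (N : ℝ) * v i ∈ S := by
  classical
  choose a b ha hb hb0 hvab using hv
  set d : ℝ := ∏ i, b i with hd
  have hd0 : d ≠ 0 := Finset.prod_ne_zero_iff.mpr fun i _ => hb0 i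
  have hdS : d ∈ S := prod_mem fun i _ => hb i
  have hdv : ∀ i, d * v i ∈ S := by
    intro i
    have h1 : d = b i * ∏ j ∈ Finset.univ.erase i, b j :=
      (Finset.mul_prod_erase Finset.univ b (Finset.mem_univ i)).symm
    have hcanc : b i * (a i / b i) = a i := by
      rw [mul_div_assoc']
      exact mul_div_cancel_left₀ _ (hb0 i)
    have h2 : d * v i = a i * ∏ j ∈ Finset.univ.erase i, b j := by
      rw [h1, hvab i, show (b i * ∏ j ∈ Finset.univ.erase i, b j) * (a i / b i)
        = (b i * (a i / b i)) * ∏ j ∈ Finset.univ.erase i, b j by ring, hcanc]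
    rw [h2]
    exact S.mul_mem (ha i) (prod_mem fun j _ => hb j)
  obtain ⟨s, hs, N, hN, hds⟩ := myExistsNatMul S hS hdS hd0
  refine ⟨N, hN, fun i => ?_⟩
  rw [show (N : ℝ) * v i = s * (d * v i) by rw [← hds]; ring]
  exact S.mul_mem hs (hdv i)

end Helpers


section Groups

variable (S : Subring ℝ) {n : ℕ}

lemma myFG (hS : Module.Finite ℤ S) (A : Matrix (Fin n) (Fin n) ℝ)
    (Λ : AddSubgroup (Fin n → ℝ))
    (hΛ : ∀ x, x ∈ Λ ↔ ∃ c : Fin n → ℝ, (∀ i, c i ∈ S) ∧ x = A.mulVec c) :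
    AddGroup.FG Λ := by
  haveI := hS
  haveI : AddGroup.FG (Fin n → S) := Module.Finite.iff_addGroup_fg.mp inferInstance
  let φ : (Fin n → S) →+ Λ :=
  { toFun := fun c => ⟨A.mulVec (fun i => (c i : ℝ)),
      (hΛ _).mpr ⟨_, fun i => (c i).2, rfl⟩⟩
    map_zero' := by
      ext
      simp only [AddSubgroup.coe_zero]
      rw [show (fun i => (((0 : Fin n → S)) i : ℝ)) = (0 : Fin n → ℝ) by ext; simp]
      simp [Matrix.mulVec_zero]
    map_add' := by
      intro c d
      ext
      simp only [AddSubgroup.coe_add]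
      rw [show (fun i => (((c + d) i : S) : ℝ)) = (fun i => (c i : ℝ)) + (fun i => (d i : ℝ)) by
        ext; simp]
      simp [Matrix.mulVec_add] }
  have hφ : Function.Surjective φ := by
    rintro ⟨x, hx⟩
    obtain ⟨c, hc, rfl⟩ := (hΛ x).mp hx
    exact ⟨fun i => ⟨c i, hc i⟩, rfl⟩
  exact AddGroup.fg_of_surjective hφ

lemma myIdx (hS : Module.Finite ℤ S) (A A' R : Matrix (Fin n) (Fin n) ℝ)
    (Λ Λ' : AddSubgroup (Fin n → ℝ))
    (hΛ : ∀ x, x ∈ Λ ↔ ∃ c : Fin n → ℝ, (∀ i, c i ∈ S) ∧ x = A.mulVec c)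
    (hΛ' : ∀ x, x ∈ Λ' ↔ ∃ c : Fin n → ℝ, (∀ i, c i ∈ S) ∧ x = A'.mulVec c)
    (N : ℕ) (hN : 0 < N) (hR : ∀ i j, (N : ℝ) * R i j ∈ S)
    (hrel : A' * R = A) :
    (Λ'.addSubgroupOf Λ).index ≠ 0 := by
  haveI : AddGroup.FG Λ := myFG S hS A Λ hΛ
  haveI : AddGroup.FG (Λ ⧸ Λ'.addSubgroupOf Λ) :=
    AddGroup.fg_of_surjective (QuotientAddGroup.mk'_surjective (Λ'.addSubgroupOf Λ))
  have tor : AddMonoid.IsTorsion (Λ ⧸ Λ'.addSubgroupOf Λ) := by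
    intro q
    induction q using QuotientAddGroup.induction_on with
    | H x =>
      rw [isOfFinAddOrder_iff_nsmul_eq_zero]
      refine ⟨N, hN, ?_⟩
      rw [show (N • ((x : Λ) : Λ ⧸ Λ'.addSubgroupOf Λ)) = ((N • x : Λ) : Λ ⧸ Λ'.addSubgroupOf Λ)
        from (map_nsmul (QuotientAddGroup.mk' (Λ'.addSubgroupOf Λ)) N x).symm]
      rw [QuotientAddGroup.eq_zero_iff]
      rw [AddSubgroup.mem_addSubgroupOf]
      obtain ⟨c, hc, hxc⟩ := (hΛ (x : Fin n → ℝ)).mp x.2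
      refine (hΛ' _).mpr ⟨R.mulVec ((N : ℝ) • c), fun i => ?_, ?_⟩
      · have : (R.mulVec ((N : ℝ) • c)) i = ∑ j, ((N : ℝ) * R i j) * c j := by
          simp [Matrix.mulVec, dotProduct, Finset.mul_sum]
          congr 1; ext j; ring
        rw [this]
        exact sum_mem fun j _ => S.mul_mem (hR i j) (hc j)
      · have hco : ((N • x : Λ) : Fin n → ℝ) = (N : ℝ) • (x : Fin n → ℝ) := by
          push_cast
          rw [Nat.cast_smul_eq_nsmul]
        rw [hco, hxc, ← hrel, ← Matrix.mulVec_mulVec, Matrix.mulVec_smul, Matrix.mulVec_smul]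
  haveI : Finite (Λ ⧸ Λ'.addSubgroupOf Λ) := AddCommGroup.finite_of_fg_torsion _ tor
  exact AddSubgroup.index_ne_zero_of_finite

end Groups

section Main

/-- lift a matrix with entries in `K` to a matrix over `K` -/
def liftK {n : ℕ} (K : Subfield ℝ) (M : Matrix (Fin n) (Fin n) ℝ)
    (hM : ∀ i j, M i j ∈ K) : Matrix (Fin n) (Fin n) K :=
  Matrix.of fun i j => ⟨M i j, hM i j⟩

lemma liftK_map {n : ℕ} (K : Subfield ℝ) (M : Matrix (Fin n) (Fin n) ℝ)
    (hM : ∀ i j, M i j ∈ K) : (liftK K M hM).map (K.subtype) = M := rfl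

lemma liftK_det {n : ℕ} (K : Subfield ℝ) (M : Matrix (Fin n) (Fin n) ℝ)
    (hM : ∀ i j, M i j ∈ K) (h : M.det ≠ 0) : IsUnit (liftK K M hM).det := by
  rw [isUnit_iff_ne_zero]
  intro h0
  apply h
  have : K.subtype (liftK K M hM).det = ((liftK K M hM).map (K.subtype)).det :=
    RingHom.map_det _ _
  rw [liftK_map] at this
  rw [← this, h0, map_zero]

theorem stmt12 {n : ℕ} (S : Subring ℝ) (hS : Module.Finite ℤ S)
    (K : Subfield ℝ)
    (hK : ∀ x : ℝ, x ∈ K ↔ ∃ a b : ℝ, a ∈ S ∧ b ∈ S ∧ b ≠ 0 ∧ x = a / b)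
    (Γ : AddSubgroup (Fin n → ℝ)) (B : Matrix (Fin n) (Fin n) ℝ)
    (hB : IsBasisMatrixOf S B Γ)
    (hΓK : ∀ x ∈ Γ, ∀ i, x i ∈ K) :
    ∀ Q ∈ Matrix.orthogonalGroup (Fin n) ℝ,
      (Commensurate Γ (Γ.map Q.mulVecLin.toAddMonoidHom) ↔ ∀ i j, Q i j ∈ K) := by
  classical
  intro Q hQ
  obtain ⟨hBdet, hBmem⟩ := hB
  have hQdet : IsUnit Q.det :=
    Matrix.isUnit_det_of_right_inverse ((Matrix.mem_orthogonalGroup_iff (Fin n) ℝ).mp hQ)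
  set Γ' := Γ.map Q.mulVecLin.toAddMonoidHom with hΓ'def
  have hsingle : ∀ j : Fin n, ∀ i, (Pi.single j (1:ℝ) : Fin n → ℝ) i ∈ S := by
    intro j i
    rw [Pi.single_apply]
    split
    · exact S.one_mem
    · exact S.zero_mem
  have hΓ'mem : ∀ x, x ∈ Γ' ↔ ∃ c : Fin n → ℝ, (∀ i, c i ∈ S) ∧ x = (Q * B).mulVec c := by
    intro x
    constructor
    · rintro ⟨y, hy, rfl⟩
      obtain ⟨c, hc, rfl⟩ := (hBmem y).mp hy
      exact ⟨c, hc, by simp [Matrix.mulVecLin_apply, Matrix.mulVec_mulVec]⟩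
    · rintro ⟨c, hc, rfl⟩
      exact ⟨B.mulVec c, (hBmem _).mpr ⟨c, hc, rfl⟩,
        by simp [Matrix.mulVecLin_apply, Matrix.mulVec_mulVec]⟩
  have hBK : ∀ i j, B i j ∈ K := by
    intro i j
    have hcol : B.mulVec (Pi.single j 1) ∈ Γ := (hBmem _).mpr ⟨Pi.single j 1, hsingle j, rfl⟩
    have := hΓK _ hcol i
    simpa [Matrix.mulVec_single] using this
  have hBdet' : B.det ≠ 0 := hBdet.ne_zero
  constructor
  · -- forward
    rintro ⟨-, h2⟩
    have hΓ'K : ∀ x ∈ Γ', ∀ i, x i ∈ K := by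
      intro x hx i
      set H := Γ.addSubgroupOf Γ' with hH
      have hsm : H.index • (⟨x, hx⟩ : Γ') ∈ H := AddSubgroup.nsmul_index_mem H _
      have hmem : ((H.index • (⟨x, hx⟩ : Γ') : Γ') : Fin n → ℝ) ∈ Γ :=
        (AddSubgroup.mem_addSubgroupOf).mp hsm
      have hco : ((H.index • (⟨x, hx⟩ : Γ') : Γ') : Fin n → ℝ) = (H.index : ℝ) • x := by
        push_cast
        rw [Nat.cast_smul_eq_nsmul]
      rw [hco] at hmem
      have hKi : ((H.index : ℝ) • x) i ∈ K := hΓK _ hmem i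
      have hKi' : ((H.index : ℝ) * x i) ∈ K := by simpa using hKi
      have hne : ((H.index : ℕ) : ℝ) ≠ 0 := Nat.cast_ne_zero.mpr h2
      have hdiv := K.div_mem hKi' (natCast_mem K H.index)
      rwa [mul_div_cancel_left₀ _ hne] at hdiv
    have hQBK : ∀ i j, (Q * B) i j ∈ K := by
      intro i j
      have hcol : (Q * B).mulVec (Pi.single j 1) ∈ Γ' :=
        (hΓ'mem _).mpr ⟨Pi.single j 1, hsingle j, rfl⟩
      have := hΓ'K _ hcol i
      simpa [Matrix.mulVec_single] using this
    set Bk := liftK K B hBK with hBk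
    set Ck := liftK K (Q * B) hQBK with hCk
    have hBkdet : IsUnit Bk.det := liftK_det K B hBK hBdet'
    set Qk := Ck * Bk⁻¹ with hQk
    have hQkBk : Qk * Bk = Ck := by
      rw [hQk, Matrix.mul_assoc, Matrix.nonsing_inv_mul _ hBkdet, mul_one]
    have hQkB : Qk.map (K.subtype) * B = Q * B := by
      calc Qk.map (K.subtype) * B = Qk.map (K.subtype) * Bk.map (K.subtype) := by
            rw [liftK_map]
        _ = (Qk * Bk).map (K.subtype) := (Matrix.map_mul).symm
        _ = Ck.map (K.subtype) := by rw [hQkBk]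
        _ = Q * B := liftK_map _ _ _
    have hQmap : Qk.map (K.subtype) = Q := by
      have h1 : Qk.map (K.subtype) * B * B⁻¹ = Q * B * B⁻¹ := by rw [hQkB]
      rwa [Matrix.mul_nonsing_inv_cancel_right _ _ hBdet,
        Matrix.mul_nonsing_inv_cancel_right _ _ hBdet] at h1
    intro i j
    rw [← hQmap]
    exact (Qk i j).2
  · -- backward
    intro hQK
    set Bk := liftK K B hBK with hBk
    set Qk := liftK K Q hQK with hQk
    have hBkdet : IsUnit Bk.det := liftK_det K B hBK hBdet'
    have hQkdet : IsUnit Qk.det := liftK_det K Q hQK hQdet.ne_zero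
    set M := Bk⁻¹ * (Qk * Bk) with hM
    set Mi := Bk⁻¹ * (Qk⁻¹ * Bk) with hMi
    have h1 : Bk * M = Qk * Bk := Matrix.mul_nonsing_inv_cancel_left _ _ hBkdet
    have h2 : Qk * (Bk * Mi) = Bk := by
      rw [hMi, Matrix.mul_nonsing_inv_cancel_left _ _ hBkdet,
        Matrix.mul_nonsing_inv_cancel_left _ _ hQkdet]
    have hr1 : B * M.map (K.subtype) = Q * B := by
      calc B * M.map (K.subtype) = Bk.map (K.subtype) * M.map (K.subtype) := by rw [liftK_map]
        _ = (Bk * M).map (K.subtype) := (Matrix.map_mul).symm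
        _ = (Qk * Bk).map (K.subtype) := by rw [h1]
        _ = Qk.map (K.subtype) * Bk.map (K.subtype) := Matrix.map_mul
        _ = Q * B := by rw [liftK_map, liftK_map]
    have hr2 : (Q * B) * Mi.map (K.subtype) = B := by
      calc (Q * B) * Mi.map (K.subtype)
          = Qk.map (K.subtype) * Bk.map (K.subtype) * Mi.map (K.subtype) := by
            rw [liftK_map, liftK_map]
        _ = (Qk * (Bk * Mi)).map (K.subtype) := by
            simp only [Matrix.map_mul, Matrix.mul_assoc]
        _ = Bk.map (K.subtype) := by rw [h2]
        _ = B := liftK_map _ _ _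
    obtain ⟨N1, hN1, hS1⟩ := myExistsNatDenom S hS
      (fun p : Fin n × Fin n => (M.map (K.subtype)) p.1 p.2)
      (fun p => (hK _).mp (M p.1 p.2).2)
    obtain ⟨N2, hN2, hS2⟩ := myExistsNatDenom S hS
      (fun p : Fin n × Fin n => (Mi.map (K.subtype)) p.1 p.2)
      (fun p => (hK _).mp (Mi p.1 p.2).2)
    constructor
    · exact myIdx S hS B (Q * B) (Mi.map (K.subtype)) Γ Γ' hBmem hΓ'mem N2 hN2
        (fun i j => hS2 (i, j)) hr2
    · exact myIdx S hS (Q * B) B (M.map (K.subtype)) Γ' Γ hΓ'mem hBmem N1 hN1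
        (fun i j => hS1 (i, j)) hr1

end Main
end

section
/- Let S ⊂ ℝ be a subring finitely generated as a ℤ-module and let Γ ⊂ ℝⁿ be a free S-module of rank n spanning ℝⁿ. Suppose that for every non-zero γ ∈ Γ, the reflection ρ_γ along γ is a coincidence isometry of Γ. Then every coincidence isometry of Γ is a product of at most n reflections ρ_γ with γ ∈ Γ \ {0}. -/
open Matrix

/-- The matrix of the reflection `ρ_γ : x ↦ x - 2(⟨x,γ⟩/⟨γ,γ⟩)γ` along `γ`. -/
noncomputable def reflMatrix {n : ℕ} (γ : Fin n → ℝ) : Matrix (Fin n) (Fin n) ℝ :=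
  1 - (2 / dotProduct γ γ) • Matrix.vecMulVec γ γ

/-- `Q` (acting on `ℝⁿ` by `x ↦ Q.mulVec x`) is a coincidence isometry of `Γ`:
it is orthogonal and `Γ` is commensurate with its image `Q(Γ)`. -/
def IsCoincidenceIsometry {n : ℕ} (Γ : AddSubgroup (Fin n → ℝ))
    (Q : Matrix (Fin n) (Fin n) ℝ) : Prop :=
  Q ∈ Matrix.orthogonalGroup (Fin n) ℝ ∧
    Commensurate Γ (Γ.map Q.mulVecLin.toAddMonoidHom)

/-- `Q` is a product of at most `n` reflections along non-zero elements of `Γ`. -/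
def IsProdOfAtMostNCoincReflections {n : ℕ} (Γ : AddSubgroup (Fin n → ℝ))
    (Q : Matrix (Fin n) (Fin n) ℝ) : Prop :=
  ∃ k : ℕ, k ≤ n ∧ ∃ g : Fin k → (Fin n → ℝ), (∀ i, g i ∈ Γ ∧ g i ≠ 0) ∧
    Q = (List.ofFn fun i => reflMatrix (g i)).prod

/-- `b` is an `S`-basis of `Γ` which is also an `ℝ`-basis of `ℝⁿ`; i.e. `Γ` is
a free `S`-module of rank `n` spanning `ℝⁿ` with basis `b`. -/
def IsSBasisOf {n : ℕ} (S : Subring ℝ) (b : Fin n → (Fin n → ℝ))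
    (Γ : AddSubgroup (Fin n → ℝ)) : Prop :=
  LinearIndependent ℝ b ∧ Submodule.span ℝ (Set.range b) = ⊤ ∧
    ∀ x, x ∈ Γ ↔ ∃ c : Fin n → ℝ, (∀ i, c i ∈ S) ∧ x = ∑ i, c i • b i

lemma vecMulVec_mulVec' {n : ℕ} (w v x : Fin n → ℝ) :
    vecMulVec w v *ᵥ x = (v ⬝ᵥ x) • w := by
  funext i
  simp only [mulVec, vecMulVec_apply, dotProduct, Pi.smul_apply, smul_eq_mul, Finset.sum_mul]
  exact Finset.sum_congr rfl fun j _ => by ring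

lemma reflMatrix_mulVec {n : ℕ} (γ x : Fin n → ℝ) :
    reflMatrix γ *ᵥ x = x - ((2 / (γ ⬝ᵥ γ)) * (γ ⬝ᵥ x)) • γ := by
  simp [reflMatrix, sub_mulVec, smul_mulVec, vecMulVec_mulVec', smul_smul]

lemma reflMatrix_fix {n : ℕ} {γ x : Fin n → ℝ} (h : γ ⬝ᵥ x = 0) :
    reflMatrix γ *ᵥ x = x := by
  simp [reflMatrix_mulVec, h]

lemma reflMatrix_reflect {n : ℕ} {u v : Fin n → ℝ} (hnorm : u ⬝ᵥ u = v ⬝ᵥ v)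
    (hne : u ≠ v) : reflMatrix (u - v) *ᵥ u = v := by
  have hγ : u - v ≠ 0 := sub_ne_zero.2 hne
  have hd : (u - v) ⬝ᵥ (u - v) ≠ 0 := fun h => hγ (dotProduct_self_eq_zero.mp h)
  have hcomm : v ⬝ᵥ u = u ⬝ᵥ v := dotProduct_comm v u
  have key : (2 / ((u - v) ⬝ᵥ (u - v))) * ((u - v) ⬝ᵥ u) = 1 := by
    have h1 : (u - v) ⬝ᵥ (u - v) = 2 * ((u-v) ⬝ᵥ u) := by
      simp only [sub_dotProduct, dotProduct_sub] at *
      rw [hcomm]; linarith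
    have hX : (u - v) ⬝ᵥ u ≠ 0 := by
      intro h0; rw [h0, mul_zero] at h1; exact hd h1
    rw [h1]; rw [div_mul_eq_mul_div, div_eq_one_iff_eq (mul_ne_zero two_ne_zero hX)]
  rw [reflMatrix_mulVec, key, one_smul, sub_sub_cancel]

lemma reflMatrix_smul {n : ℕ} (c : ℝ) (hc : c ≠ 0) (γ : Fin n → ℝ) :
    reflMatrix (c • γ) = reflMatrix γ := by
  have h1 : vecMulVec (c • γ) (c • γ) = (c * c) • vecMulVec γ γ := by
    ext i j; simp [vecMulVec_apply]; ring
  have h2 : (c • γ) ⬝ᵥ (c • γ) = (c * c) * (γ ⬝ᵥ γ) := by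
    simp [smul_dotProduct, dotProduct_smul]; ring
  have h3 : 2 / (c * c * (γ ⬝ᵥ γ)) * (c * c) = 2 / (γ ⬝ᵥ γ) := by
    rcases eq_or_ne (γ ⬝ᵥ γ) 0 with h | h
    · simp [h]
    · field_simp
  rw [reflMatrix, reflMatrix, h1, h2, smul_smul, h3]

lemma vecMulVec_mul_self {n : ℕ} (γ : Fin n → ℝ) :
    vecMulVec γ γ * vecMulVec γ γ = (γ ⬝ᵥ γ) • vecMulVec γ γ := by
  ext i j
  simp only [mul_apply, vecMulVec_apply, Matrix.smul_apply, dotProduct, smul_eq_mul, Finset.sum_mul,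
    Finset.mul_sum]
  exact Finset.sum_congr rfl fun k _ => by ring

lemma reflMatrix_mul_self {n : ℕ} {γ : Fin n → ℝ} (hγ : γ ≠ 0) :
    reflMatrix γ * reflMatrix γ = 1 := by
  have hd : γ ⬝ᵥ γ ≠ 0 := fun h => hγ (dotProduct_self_eq_zero.mp h)
  set c : ℝ := 2 / (γ ⬝ᵥ γ) with hc
  set G := vecMulVec γ γ with hG
  have expand : (1 - c • G) * (1 - c • G) = 1 - (c + c) • G + (c * c) • (G * G) := by
    simp only [sub_mul, mul_sub, one_mul, mul_one, smul_mul_smul_comm, add_smul]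
    abel
  have hcc : (c * c) * (γ ⬝ᵥ γ) = c + c := by
    rw [hc]; field_simp; ring
  rw [reflMatrix, ← hc, ← hG, expand, vecMulVec_mul_self, ← hG, smul_smul, hcc]
  abel

lemma star_reflMatrix {n : ℕ} (γ : Fin n → ℝ) : star (reflMatrix γ) = reflMatrix γ := by
  have h : star (vecMulVec γ γ) = vecMulVec γ γ := by
    ext i j
    simp [vecMulVec_apply, mul_comm]
  rw [reflMatrix, star_sub, star_one, star_smul, h]
  norm_num

lemma reflMatrix_mem_orthogonal {n : ℕ} {γ : Fin n → ℝ} (hγ : γ ≠ 0) :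
    reflMatrix γ ∈ Matrix.orthogonalGroup (Fin n) ℝ := by
  rw [Matrix.mem_orthogonalGroup_iff, show (reflMatrix γ)ᵀ = star (reflMatrix γ) by ext i j; simp [Matrix.star_apply], star_reflMatrix, reflMatrix_mul_self hγ]

lemma orth_dotProduct {n : ℕ} {Q : Matrix (Fin n) (Fin n) ℝ}
    (hQ : Q ∈ Matrix.orthogonalGroup (Fin n) ℝ) (u v : Fin n → ℝ) :
    (Q *ᵥ u) ⬝ᵥ (Q *ᵥ v) = u ⬝ᵥ v := by
  have h : star Q * Q = 1 := (Matrix.mem_orthogonalGroup_iff' _ _).mp hQ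
  rw [dotProduct_mulVec, ← vecMul_transpose, vecMul_vecMul]
  have hT : Qᵀ = star Q := by
    ext i j; simp [Matrix.star_apply]
  rw [hT, h, vecMul_one]

lemma eq_one_of_fix {n : ℕ} {Q : Matrix (Fin n) (Fin n) ℝ} {b : Fin n → (Fin n → ℝ)}
    (hspan : Submodule.span ℝ (Set.range b) = ⊤) (hfix : ∀ i, Q *ᵥ b i = b i) : Q = 1 := by
  have h : Q.mulVecLin = LinearMap.id := by
    apply LinearMap.ext_on hspan
    rintro x ⟨i, rfl⟩
    simpa using hfix i
  have h2 : ∀ x, Q *ᵥ x = x := fun x => by simpa using LinearMap.congr_fun h x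
  ext i j
  have := congrFun (h2 (Pi.single j 1)) i
  rw [mulVec_single] at this
  simp [Matrix.col] at this
  rw [this]
  simp [Matrix.one_apply, Pi.single_apply, eq_comm]

lemma Commensurate.trans {n : ℕ} {A B C : AddSubgroup (Fin n → ℝ)}
    (h1 : Commensurate A B) (h2 : Commensurate B C) : Commensurate A C := by
  exact ⟨AddSubgroup.relIndex_ne_zero_trans h2.1 h1.1,
    AddSubgroup.relIndex_ne_zero_trans h1.2 h2.2⟩

lemma Commensurate.map_equiv {n : ℕ} {A B : AddSubgroup (Fin n → ℝ)}
    (e : (Fin n → ℝ) ≃+ (Fin n → ℝ)) (h : Commensurate A B) :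
    Commensurate (A.map (e : (Fin n → ℝ) →+ (Fin n → ℝ)))
      (B.map (e : (Fin n → ℝ) →+ (Fin n → ℝ))) := by
  have key : ∀ H K : AddSubgroup (Fin n → ℝ),
      (H.map (e : (Fin n → ℝ) →+ (Fin n → ℝ))).relIndex
        (K.map (e : (Fin n → ℝ) →+ (Fin n → ℝ))) = H.relIndex K := by
    intro H K
    rw [AddSubgroup.map_equiv_eq_comap_symm, AddSubgroup.relIndex_comap]
    congr 1
    rw [AddSubgroup.map_map]
    convert AddSubgroup.map_id K using 2
    ext x; simp
  constructor
  · show (AddSubgroup.map _ B).relIndex (AddSubgroup.map _ A) ≠ 0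
    rw [key]; exact h.1
  · show (AddSubgroup.map _ A).relIndex (AddSubgroup.map _ B) ≠ 0
    rw [key]; exact h.2

lemma Commensurate.exists_nsmul {n : ℕ} {A B : AddSubgroup (Fin n → ℝ)}
    (h : Commensurate A B) : ∃ k : ℕ, k ≠ 0 ∧ ∀ x ∈ B, k • x ∈ A := by
  refine ⟨(A.addSubgroupOf B).index, h.2, fun x hx => ?_⟩
  have := AddSubgroup.nsmul_index_mem (A.addSubgroupOf B) (⟨x, hx⟩ : B)
  rwa [AddSubgroup.mem_addSubgroupOf] at this

noncomputable def orthAddEquiv {n : ℕ} {Q : Matrix (Fin n) (Fin n) ℝ}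
    (hQ : Q ∈ Matrix.orthogonalGroup (Fin n) ℝ) : (Fin n → ℝ) ≃+ (Fin n → ℝ) where
  toFun := Q.mulVec
  invFun := (star Q).mulVec
  left_inv x := by
    rw [Matrix.mulVec_mulVec, show star Q * Q = 1 from (Matrix.mem_orthogonalGroup_iff' _ _).mp hQ, Matrix.one_mulVec]
  right_inv x := by
    rw [Matrix.mulVec_mulVec, show Q * star Q = 1 from (Matrix.mem_orthogonalGroup_iff _ _).mp hQ, Matrix.one_mulVec]
  map_add' := Matrix.mulVec_add Q

lemma IsCoincidenceIsometry.mul {n : ℕ} {Γ : AddSubgroup (Fin n → ℝ)}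
    {A B : Matrix (Fin n) (Fin n) ℝ} (hA : IsCoincidenceIsometry Γ A)
    (hB : IsCoincidenceIsometry Γ B) : IsCoincidenceIsometry Γ (A * B) := by
  refine ⟨mul_mem hA.1 hB.1, ?_⟩
  set e := orthAddEquiv hA.1 with he
  have hhom : (e : (Fin n → ℝ) →+ (Fin n → ℝ)) = A.mulVecLin.toAddMonoidHom := by
    ext x; rfl
  have h1 : Γ.map ((A * B).mulVecLin.toAddMonoidHom)
      = (Γ.map B.mulVecLin.toAddMonoidHom).map (e : (Fin n → ℝ) →+ (Fin n → ℝ)) := by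
    rw [hhom, AddSubgroup.map_map]
    congr 1
    ext x
    simp [Matrix.mulVec_mulVec]
  rw [h1]
  refine hA.2.trans ?_
  have := hB.2.map_equiv e
  rwa [hhom] at this

lemma aux_induction {n : ℕ} (Γ : AddSubgroup (Fin n → ℝ)) (b : Fin n → (Fin n → ℝ))
    (hspan : Submodule.span ℝ (Set.range b) = ⊤)
    (hrefl : ∀ γ ∈ Γ, γ ≠ 0 → IsCoincidenceIsometry Γ (reflMatrix γ))
    (hbΓ : ∀ i, b i ∈ Γ) :
    ∀ m i, i + m = n → ∀ Q : Matrix (Fin n) (Fin n) ℝ, IsCoincidenceIsometry Γ Q →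
      (∀ j : Fin n, (j : ℕ) < i → Q *ᵥ b j = b j) →
      ∃ k, k ≤ m ∧ ∃ g : Fin k → (Fin n → ℝ), (∀ t, g t ∈ Γ ∧ g t ≠ 0) ∧
        Q = (List.ofFn fun t => reflMatrix (g t)).prod := by
  intro m
  induction m with
  | zero =>
    intro i hi Q hQ hfix
    have hQ1 : Q = 1 := eq_one_of_fix hspan (fun j => hfix j (by omega))
    exact ⟨0, le_refl 0, Fin.elim0, fun t => t.elim0, by rw [hQ1]; simp⟩
  | succ m ih =>
    intro i hi Q hQ hfix
    have hin : i < n := by omega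
    set iF : Fin n := ⟨i, hin⟩ with hiF
    set v : Fin n → ℝ := b iF with hv
    by_cases hfixv : Q *ᵥ v = v
    · obtain ⟨k, hk, g, hg, hprod⟩ := ih (i + 1) (by omega) Q hQ (by
        intro j hj
        rcases Nat.lt_or_ge (j : ℕ) i with h | h
        · exact hfix j h
        · have : j = iF := Fin.ext (show (j : ℕ) = i by omega)
          rw [this]; exact hfixv)
      exact ⟨k, by omega, g, hg, hprod⟩
    · obtain ⟨k, hk0, hkmem⟩ := hQ.2.exists_nsmul
      have hvΓ : v ∈ Γ := hbΓ iF
      have hQvmem : Q *ᵥ v ∈ Γ.map Q.mulVecLin.toAddMonoidHom :=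
        AddSubgroup.mem_map.2 ⟨v, hvΓ, rfl⟩
      set γ : Fin n → ℝ := k • (Q *ᵥ v) - k • v with hγdef
      have hγΓ : γ ∈ Γ := sub_mem (hkmem _ hQvmem) (AddSubgroup.nsmul_mem Γ hvΓ k)
      have hγeq : γ = (k : ℝ) • (Q *ᵥ v - v) := by
        rw [hγdef, smul_sub, Nat.cast_smul_eq_nsmul, Nat.cast_smul_eq_nsmul]
      have hγ0 : γ ≠ 0 := by
        rw [hγeq]
        exact smul_ne_zero (Nat.cast_ne_zero.2 hk0) (sub_ne_zero.2 hfixv)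
      set R := reflMatrix γ with hR
      have hreflγ : R = reflMatrix (Q *ᵥ v - v) := by
        rw [hR, hγeq, reflMatrix_smul _ (Nat.cast_ne_zero.2 hk0)]
      have hRQ : IsCoincidenceIsometry Γ (R * Q) := (hrefl γ hγΓ hγ0).mul hQ
      have hnorm : (Q *ᵥ v) ⬝ᵥ (Q *ᵥ v) = v ⬝ᵥ v := orth_dotProduct hQ.1 v v
      have hRQv : R *ᵥ (Q *ᵥ v) = v := by
        rw [hreflγ]
        exact reflMatrix_reflect hnorm hfixv
      obtain ⟨k', hk', g', hg', hprod'⟩ := ih (i + 1) (by omega) (R * Q) hRQ (by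
        intro j hj
        rcases Nat.lt_or_ge (j : ℕ) i with h | h
        · have hQbj : Q *ᵥ b j = b j := hfix j h
          rw [← Matrix.mulVec_mulVec, hQbj]
          apply reflMatrix_fix
          have : (Q *ᵥ v) ⬝ᵥ (b j) = v ⬝ᵥ (b j) := by
            conv_lhs => rw [← hQbj]
            exact orth_dotProduct hQ.1 v (b j)
          rw [hγeq, smul_dotProduct, sub_dotProduct, this]
          simp
        · have : j = iF := Fin.ext (show (j : ℕ) = i by omega)
          rw [this, ← Matrix.mulVec_mulVec]
          exact hRQv)
      have hQeq : Q = R * (R * Q) := by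
        rw [← mul_assoc, reflMatrix_mul_self hγ0, one_mul]
      refine ⟨k' + 1, by omega, Fin.cons γ g', ?_, ?_⟩
      · intro t
        refine Fin.cases ?_ ?_ t
        · simpa using ⟨hγΓ, hγ0⟩
        · intro t'; simpa using hg' t'
      · rw [hQeq, hprod']
        rw [List.ofFn_succ]
        simp [List.prod_cons, hR]

theorem stmt13 {n : ℕ} (S : Subring ℝ) (hS : Module.Finite ℤ S)
    (Γ : AddSubgroup (Fin n → ℝ)) (b : Fin n → (Fin n → ℝ)) (hb : IsSBasisOf S b Γ)
    (hrefl : ∀ γ ∈ Γ, γ ≠ 0 → IsCoincidenceIsometry Γ (reflMatrix γ)) :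
    ∀ Q : Matrix (Fin n) (Fin n) ℝ, IsCoincidenceIsometry Γ Q →
      IsProdOfAtMostNCoincReflections Γ Q := by
  obtain ⟨hli, hspan, hmem⟩ := hb
  have hbΓ : ∀ i, b i ∈ Γ := by
    intro i
    rw [hmem]
    refine ⟨fun j => if j = i then 1 else 0, fun j => ?_, ?_⟩
    · dsimp only
      split
      · exact S.one_mem
      · exact S.zero_mem
    · simp [ite_smul]
  intro Q hQ
  obtain ⟨k, hk, g, hg, hprod⟩ :=
    aux_induction Γ b hspan hrefl hbΓ n 0 (by omega) Q hQ (fun j hj => absurd hj (by omega))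
  exact ⟨k, hk, g, hg, hprod⟩
end
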